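/- Let g ≥ 2 be an integer. If A ⊆ [n] is a set such that every nonzero integer d has at most g - 1 representations d = a - a' with a, a' ∈ A, then A is a C_2[g]-set in ℤ, and consequently |A| ≤ (g-1)^{1/2} n^{1/2} + O(n^{1/4}), where the implicit constant depends only on g. -/

import Mathlib

private lemma sum_tri' (u : ℕ) : ∑ d ∈ Finset.Ioo (-(u:ℤ)) (u:ℤ), ((u:ℤ) - |d|).toNat = u^2 := by
  induction u with
  | zero => simp
  | succ u ih =>
    have hset : Finset.Ioo (-(u+1:ℤ)) ((u:ℤ)+1) = Finset.Icc (-(u:ℤ)) (u:ℤ) := by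
      ext d; simp only [Finset.mem_Ioo, Finset.mem_Icc]; omega
    have hsub : ∑ d ∈ Finset.Icc (-(u:ℤ)) (u:ℤ), ((u:ℤ) - |d|).toNat
        = ∑ d ∈ Finset.Ioo (-(u:ℤ)) (u:ℤ), ((u:ℤ) - |d|).toNat := by
      refine (Finset.sum_subset (by intro d; simp only [Finset.mem_Ioo, Finset.mem_Icc]; omega) ?_).symm
      intro d hd hnd
      simp only [Finset.mem_Ioo, Finset.mem_Icc] at hd hnd
      rw [Int.abs_eq_natAbs]; omega
    have hcard : (Finset.Icc (-(u:ℤ)) (u:ℤ)).card = 2*u+1 := by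
      rw [Int.card_Icc]; omega
    push_cast
    rw [hset]
    have : ∀ d ∈ Finset.Icc (-(u:ℤ)) (u:ℤ), ((u:ℤ)+1 - |d|).toNat = ((u:ℤ) - |d|).toNat + 1 := by
      intro d hd; simp only [Finset.mem_Icc] at hd; rw [Int.abs_eq_natAbs]; omega
    rw [Finset.sum_congr rfl this, Finset.sum_add_distrib, hsub, ih, Finset.sum_const, hcard]
    ring

private lemma count_h1 (n u : ℕ) (A : Finset ℤ) (hA : ∀ a ∈ A, 1 ≤ a ∧ a ≤ (n:ℤ)) :
    ∑ i ∈ Finset.Icc (1 - (u:ℤ)) (n:ℤ), (A.filter fun a => i ≤ a ∧ a < i + u).card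
      = u * A.card := by
  have : ∀ i : ℤ, (A.filter fun a => i ≤ a ∧ a < i + u).card
      = ∑ a ∈ A, ite (i ≤ a ∧ a < i + u) 1 0 := fun i => Finset.card_filter _ _
  simp_rw [this]
  rw [Finset.sum_comm]
  have key : ∀ a ∈ A, ∑ i ∈ Finset.Icc (1 - (u:ℤ)) (n:ℤ), ite (i ≤ a ∧ a < i + u) 1 0 = u := by
    intro a ha
    obtain ⟨h1, h2⟩ := hA a ha
    rw [← Finset.card_filter]
    have : ((Finset.Icc (1 - (u:ℤ)) (n:ℤ)).filter fun i => i ≤ a ∧ a < i + u)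
        = Finset.Icc (a - u + 1) a := by
      ext i; simp only [Finset.mem_filter, Finset.mem_Icc]; omega
    rw [this, Int.card_Icc]; omega
  rw [Finset.sum_congr rfl key, Finset.sum_const, smul_eq_mul, mul_comm]

private lemma count_h2 (n u g : ℕ) (A : Finset ℤ) (hA : ∀ a ∈ A, 1 ≤ a ∧ a ≤ (n:ℤ))
    (hd : ∀ d : ℤ, d ≠ 0 → ((A ×ˢ A).filter fun p => p.1 - p.2 = d).card ≤ g - 1) :
    ∑ i ∈ Finset.Icc (1 - (u:ℤ)) (n:ℤ), (A.filter fun a => i ≤ a ∧ a < i + u).card ^ 2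
      ≤ u * A.card + (g - 1) * u ^ 2 := by
  set I := Finset.Icc (1 - (u:ℤ)) (n:ℤ) with hI
  have step1 : ∑ i ∈ I, (A.filter fun a => i ≤ a ∧ a < i + u).card ^ 2
      = ∑ p ∈ A ×ˢ A, ((u:ℤ) - |p.1 - p.2|).toNat := by
    have h1 : ∀ i : ℤ, (A.filter fun a => i ≤ a ∧ a < i + u).card ^ 2
        = ∑ p ∈ A ×ˢ A, ite ((i ≤ p.1 ∧ p.1 < i + u) ∧ (i ≤ p.2 ∧ p.2 < i + u)) 1 0 := by
      intro i
      rw [sq, ← Finset.card_product, ← Finset.filter_product, Finset.card_filter]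
    simp_rw [h1]
    rw [Finset.sum_comm]
    refine Finset.sum_congr rfl ?_
    intro p hp
    rw [Finset.mem_product] at hp
    obtain ⟨ha1, ha2⟩ := hA p.1 hp.1
    obtain ⟨hb1, hb2⟩ := hA p.2 hp.2
    rw [← Finset.card_filter]
    rcases le_total p.1 p.2 with h | h
    · have : (I.filter fun i => (i ≤ p.1 ∧ p.1 < i + u) ∧ (i ≤ p.2 ∧ p.2 < i + u))
          = Finset.Icc (p.2 - u + 1) p.1 := by
        ext i; simp only [Finset.mem_filter, Finset.mem_Icc, hI]; omega
      rw [this, Int.card_Icc, Int.abs_eq_natAbs]; omega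
    · have : (I.filter fun i => (i ≤ p.1 ∧ p.1 < i + u) ∧ (i ≤ p.2 ∧ p.2 < i + u))
          = Finset.Icc (p.1 - u + 1) p.2 := by
        ext i; simp only [Finset.mem_filter, Finset.mem_Icc, hI]; omega
      rw [this, Int.card_Icc, Int.abs_eq_natAbs]; omega
  rw [step1]
  set D := (A ×ˢ A).image (fun p : ℤ × ℤ => p.1 - p.2) with hD
  have step2 : ∑ p ∈ A ×ˢ A, ((u:ℤ) - |p.1 - p.2|).toNat
      = ∑ d ∈ D, ((A ×ˢ A).filter fun p => p.1 - p.2 = d).card * ((u:ℤ) - |d|).toNat := by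
    rw [← Finset.sum_fiberwise_of_maps_to (g := fun p : ℤ × ℤ => p.1 - p.2)
      (fun p hp => Finset.mem_image_of_mem _ hp)]
    refine Finset.sum_congr rfl fun d _ => ?_
    rw [Finset.sum_congr rfl (fun p hp => by rw [(Finset.mem_filter.mp hp).2]),
      Finset.sum_const, smul_eq_mul]
  rw [step2]
  have hcnt0 : ((A ×ˢ A).filter fun p : ℤ × ℤ => p.1 - p.2 = (0:ℤ)).card ≤ A.card := by
    apply Finset.card_le_card_of_injOn (fun p => p.1)
    · intro p hp
      simp only [Finset.mem_coe, Finset.mem_filter, Finset.mem_product] at hp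
      exact hp.1.1
    · intro p hp q hq hpq
      simp only [Finset.mem_coe, Finset.mem_filter, Finset.mem_product] at hp hq
      have hpq' : p.1 = q.1 := hpq
      exact Prod.ext hpq' (by omega)
  have hrest : ∀ s : Finset ℤ, (0:ℤ) ∉ s →
      ∑ d ∈ s, ((A ×ˢ A).filter fun p => p.1 - p.2 = d).card * ((u:ℤ) - |d|).toNat
        ≤ (g - 1) * u ^ 2 := by
    intro s h0s
    calc ∑ d ∈ s, ((A ×ˢ A).filter fun p => p.1 - p.2 = d).card * ((u:ℤ) - |d|).toNat
        ≤ ∑ d ∈ s, (g - 1) * ((u:ℤ) - |d|).toNat := by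
          refine Finset.sum_le_sum fun d hds => ?_
          exact Nat.mul_le_mul_right _ (hd d (fun h => h0s (h ▸ hds)))
      _ = (g - 1) * ∑ d ∈ s, ((u:ℤ) - |d|).toNat := by rw [Finset.mul_sum]
      _ ≤ (g - 1) * u ^ 2 := by
          refine Nat.mul_le_mul_left _ ?_
          rw [← sum_tri' u]
          refine Finset.sum_le_sum_of_ne_zero fun d hds hne => ?_
          simp only [Finset.mem_Ioo]
          by_contra hc
          apply hne
          rw [Int.abs_eq_natAbs]
          simp only [Finset.mem_Ioo, not_and_or, not_lt] at hc
          omega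
  by_cases h0 : (0:ℤ) ∈ D
  · rw [← Finset.add_sum_erase _ _ h0]
    have hf0 : ((u:ℤ) - |(0:ℤ)|).toNat = u := by simp
    have hr := hrest (D.erase 0) (Finset.notMem_erase _ _)
    have hb : ((A ×ˢ A).filter fun p : ℤ × ℤ => p.1 - p.2 = (0:ℤ)).card * ((u:ℤ) - |(0:ℤ)|).toNat
        ≤ A.card * u := by rw [hf0]; exact Nat.mul_le_mul_right _ hcnt0
    calc _ ≤ A.card * u + (g-1) * u^2 := Nat.add_le_add hb hr
      _ = u * A.card + (g-1) * u^2 := by ring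
  · have := hrest D h0
    omega

/-- `A ⊆ Γ` is a `C_h[g]`-set. -/
def IsChSet {Γ : Type*} [AddCommGroup Γ] (h g : ℕ) (A : Set Γ) : Prop :=
  ∀ X : Finset Γ, X.card = h → ∀ K : Finset Γ, K.card = g →
    ∃ k ∈ K, ¬ (∀ x ∈ X, x + k ∈ A)

set_option maxHeartbeats 1000000 in
theorem stmt19 (g : ℕ) (hg : 2 ≤ g) :
    ∃ C : ℝ, 0 < C ∧ ∀ n : ℕ, ∀ A : Finset ℤ, (A : Set ℤ) ⊆ Set.Icc 1 (n : ℤ) →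
      (∀ d : ℤ, d ≠ 0 → ((A ×ˢ A).filter fun p => p.1 - p.2 = d).card ≤ g - 1) →
      IsChSet 2 g (A : Set ℤ) ∧
      (A.card : ℝ) ≤ ((g : ℝ) - 1) ^ ((1 : ℝ) / 2) * (n : ℝ) ^ ((1 : ℝ) / 2)
        + C * (n : ℝ) ^ ((1 : ℝ) / 4) := by
  refine ⟨(g:ℝ) + 2, by positivity, ?_⟩
  intro n A hA hd
  constructor
  · -- C₂[g]-set
    intro X hX K hK
    by_contra hcon
    push_neg at hcon
    obtain ⟨x, y, hxy, rfl⟩ := Finset.card_eq_two.mp hX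
    have hd0 : x - y ≠ 0 := sub_ne_zero.mpr hxy
    have hle : K.card ≤ ((A ×ˢ A).filter fun p => p.1 - p.2 = x - y).card := by
      apply Finset.card_le_card_of_injOn (fun k => (x + k, y + k))
      · intro k hk
        simp only [Finset.mem_coe, Finset.mem_filter, Finset.mem_product]
        refine ⟨⟨?_, ?_⟩, by ring⟩
        · exact hcon k hk x (by simp)
        · exact hcon k hk y (by simp)
      · intro a _ b _ hab
        simpa using congrArg Prod.fst hab
    have := hd (x - y) hd0
    omega
  · -- size bound
    rcases Nat.eq_zero_or_pos n with hn | hn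
    · subst hn
      have hAe : A = ∅ := by
        refine Finset.eq_empty_of_forall_notMem fun a ha => ?_
        have h := hA ha
        rw [Set.mem_Icc] at h
        have h2 := h.2
        push_cast at h2
        omega
      rw [hAe]
      simp only [Finset.card_empty, Nat.cast_zero]
      rw [Real.zero_rpow (by norm_num), Real.zero_rpow (by norm_num)]
      simp
    · -- main case
      have hnr : (1:ℝ) ≤ (n:ℝ) := by exact_mod_cast hn
      have hnp : (0:ℝ) < (n:ℝ) := by linarith
      have hrp : (0:ℝ) < (n:ℝ)^((3:ℝ)/4) := Real.rpow_pos_of_pos hnp _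
      obtain ⟨u, hu1, hu_low, hu_high⟩ : ∃ u : ℕ, 1 ≤ u ∧ (n:ℝ)^((3:ℝ)/4) ≤ (u:ℝ) ∧
          (u:ℝ) ≤ (n:ℝ)^((3:ℝ)/4) + 1 :=
        ⟨⌈(n:ℝ)^((3:ℝ)/4)⌉₊, Nat.ceil_pos.mpr hrp, Nat.le_ceil _,
          (Nat.ceil_lt_add_one hrp.le).le⟩
      have huR : (0:ℝ) < (u:ℝ) := by exact_mod_cast hu1
      have hA' : ∀ a ∈ A, 1 ≤ a ∧ a ≤ (n:ℤ) := fun a ha => Set.mem_Icc.mp (hA ha)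
      have h1 := count_h1 n u A hA'
      have h2 := count_h2 n u g A hA' hd
      have hcardI : (Finset.Icc (1 - (u:ℤ)) (n:ℤ)).card = n + u := by
        rw [Int.card_Icc]; omega
      set S : ℝ := (A.card : ℝ) with hS_def
      have hS0 : 0 ≤ S := Nat.cast_nonneg _
      -- Cauchy–Schwarz
      have key : ((u:ℝ) * S)^2 ≤ ((n:ℝ)+(u:ℝ)) * ((u:ℝ)*S + ((g:ℝ)-1)*(u:ℝ)^2) := by
        have cs := Finset.sum_mul_sq_le_sq_mul_sq (Finset.Icc (1 - (u:ℤ)) (n:ℤ))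
          (fun _ => (1:ℝ)) (fun i => ((A.filter fun a => i ≤ a ∧ a < i + u).card : ℝ))
        simp only [one_mul, one_pow] at cs
        have e1 : ∑ i ∈ Finset.Icc (1 - (u:ℤ)) (n:ℤ),
            ((A.filter fun a => i ≤ a ∧ a < i + u).card : ℝ) = (u:ℝ) * S := by
          rw [← Nat.cast_sum, h1]; push_cast; ring
        have e2 : ∑ i ∈ Finset.Icc (1 - (u:ℤ)) (n:ℤ),
            ((A.filter fun a => i ≤ a ∧ a < i + u).card : ℝ)^2
            ≤ (u:ℝ)*S + ((g:ℝ)-1)*(u:ℝ)^2 := by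
          have : ((∑ i ∈ Finset.Icc (1 - (u:ℤ)) (n:ℤ),
              (A.filter fun a => i ≤ a ∧ a < i + u).card ^ 2 : ℕ) : ℝ)
              ≤ ((u * A.card + (g - 1) * u ^ 2 : ℕ) : ℝ) := by exact_mod_cast h2
          rw [Nat.cast_sum] at this
          push_cast [Nat.cast_sub (by omega : 1 ≤ g)] at this
          convert this using 2 <;> push_cast <;> ring
        have e3 : ∑ i ∈ Finset.Icc (1 - (u:ℤ)) (n:ℤ), (1:ℝ) = (n:ℝ) + (u:ℝ) := by
          rw [Finset.sum_const, hcardI]; push_cast; ring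
        rw [e1, e3] at cs
        calc ((u:ℝ)*S)^2 ≤ ((n:ℝ)+(u:ℝ)) * ∑ i ∈ Finset.Icc (1 - (u:ℤ)) (n:ℤ),
              ((A.filter fun a => i ≤ a ∧ a < i + u).card : ℝ)^2 := cs
          _ ≤ _ := by
              apply mul_le_mul_of_nonneg_left e2
              positivity
      -- cancel one factor of u
      have key2 : (u:ℝ) * S^2 ≤ ((n:ℝ)+(u:ℝ)) * (S + ((g:ℝ)-1)*(u:ℝ)) := by
        rw [← mul_le_mul_iff_right₀ huR]
        nlinarith [key]
      set b : ℝ := ((n:ℝ)+(u:ℝ))/(u:ℝ) with hb_def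
      set M : ℝ := ((g:ℝ)-1)*((n:ℝ)+(u:ℝ)) with hM_def
      have hg1 : (1:ℝ) ≤ (g:ℝ) - 1 := by
        have : (2:ℝ) ≤ (g:ℝ) := by exact_mod_cast hg
        linarith
      have hM0 : 0 ≤ M := by positivity
      have hb0 : 0 ≤ b := by positivity
      have hub : b * (u:ℝ) = (n:ℝ)+(u:ℝ) := div_mul_cancel₀ _ (ne_of_gt huR)
      set t : ℝ := Real.sqrt M with ht_def
      have ht0 : 0 ≤ t := Real.sqrt_nonneg _
      have ht2 : t^2 = M := Real.sq_sqrt hM0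
      have hq : S^2 ≤ b*S + M := by
        rw [← mul_le_mul_iff_right₀ huR]
        calc (u:ℝ)*S^2 ≤ ((n:ℝ)+(u:ℝ)) * (S + ((g:ℝ)-1)*(u:ℝ)) := key2
          _ = (u:ℝ)*(b*S+M) := by rw [hM_def, hb_def]; field_simp
      have hS_le : S ≤ b + t := by
        by_contra hc
        push_neg at hc
        nlinarith [hq, ht2, ht0, hb0, hc, hS0, sq_nonneg (S - b - t)]
      -- bound b
      have h14 : (0:ℝ) ≤ (n:ℝ)^((1:ℝ)/4) := (Real.rpow_pos_of_pos hnp _).le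
      have h14ge1 : (1:ℝ) ≤ (n:ℝ)^((1:ℝ)/4) := by
        calc (1:ℝ) = (1:ℝ)^((1:ℝ)/4) := (Real.one_rpow _).symm
          _ ≤ (n:ℝ)^((1:ℝ)/4) := Real.rpow_le_rpow (by norm_num) hnr (by norm_num)
      have h34ge1 : (1:ℝ) ≤ (n:ℝ)^((3:ℝ)/4) := by
        calc (1:ℝ) = (1:ℝ)^((3:ℝ)/4) := (Real.one_rpow _).symm
          _ ≤ (n:ℝ)^((3:ℝ)/4) := Real.rpow_le_rpow (by norm_num) hnr (by norm_num)
      have hb_le : b ≤ (n:ℝ)^((1:ℝ)/4) + 1 := by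
        rw [hb_def, div_le_iff₀ huR]
        have h34 : (n:ℝ)^((1:ℝ)/4) * (n:ℝ)^((3:ℝ)/4) = (n:ℝ) := by
          rw [← Real.rpow_add hnp]; norm_num
        have hu1R : (1:ℝ) ≤ (u:ℝ) := by exact_mod_cast hu1
        calc (n:ℝ) + (u:ℝ) = (n:ℝ)^((1:ℝ)/4) * (n:ℝ)^((3:ℝ)/4) + (u:ℝ) := by rw [h34]
          _ ≤ (n:ℝ)^((1:ℝ)/4) * (u:ℝ) + 1 * (u:ℝ) := by
              refine add_le_add (mul_le_mul_of_nonneg_left hu_low h14) (by linarith)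
          _ = ((n:ℝ)^((1:ℝ)/4) + 1) * (u:ℝ) := by ring
      -- bound t
      have e1 : (n:ℝ)^((1:ℝ)/2) * (n:ℝ)^((1:ℝ)/2) = (n:ℝ) := by
        rw [← Real.rpow_add hnp]; norm_num
      have e2 : (n:ℝ)^((1:ℝ)/2) * (n:ℝ)^((1:ℝ)/4) = (n:ℝ)^((3:ℝ)/4) := by
        rw [← Real.rpow_add hnp]; norm_num
      have h12 : (0:ℝ) ≤ (n:ℝ)^((1:ℝ)/2) := (Real.rpow_pos_of_pos hnp _).le
      have hsq : (n:ℝ) + (u:ℝ) ≤ ((n:ℝ)^((1:ℝ)/2) + (n:ℝ)^((1:ℝ)/4))^2 := by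
        have expand : ((n:ℝ)^((1:ℝ)/2) + (n:ℝ)^((1:ℝ)/4))^2
            = (n:ℝ)^((1:ℝ)/2) * (n:ℝ)^((1:ℝ)/2) + 2*((n:ℝ)^((1:ℝ)/2) * (n:ℝ)^((1:ℝ)/4))
              + (n:ℝ)^((1:ℝ)/4) * (n:ℝ)^((1:ℝ)/4) := by ring
        rw [expand, e1, e2]
        have : (0:ℝ) ≤ (n:ℝ)^((1:ℝ)/4) * (n:ℝ)^((1:ℝ)/4) := mul_nonneg h14 h14
        linarith
      have hsqrt_nu : Real.sqrt ((n:ℝ)+(u:ℝ)) ≤ (n:ℝ)^((1:ℝ)/2) + (n:ℝ)^((1:ℝ)/4) := by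
        calc Real.sqrt ((n:ℝ)+(u:ℝ)) ≤ Real.sqrt (((n:ℝ)^((1:ℝ)/2) + (n:ℝ)^((1:ℝ)/4))^2) :=
              Real.sqrt_le_sqrt hsq
          _ = (n:ℝ)^((1:ℝ)/2) + (n:ℝ)^((1:ℝ)/4) := Real.sqrt_sq (by positivity)
      have ht_le : t ≤ ((g:ℝ)-1)^((1:ℝ)/2) * ((n:ℝ)^((1:ℝ)/2) + (n:ℝ)^((1:ℝ)/4)) := by
        rw [ht_def, hM_def, Real.sqrt_mul (by linarith), ← Real.sqrt_eq_rpow]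
        exact mul_le_mul_of_nonneg_left hsqrt_nu (Real.sqrt_nonneg _)
      have hgh : ((g:ℝ)-1)^((1:ℝ)/2) ≤ (g:ℝ) := by
        calc ((g:ℝ)-1)^((1:ℝ)/2) ≤ ((g:ℝ)-1)^(1:ℝ) :=
              Real.rpow_le_rpow_of_exponent_le hg1 (by norm_num)
          _ = (g:ℝ)-1 := Real.rpow_one _
          _ ≤ (g:ℝ) := by linarith
      have hgs0 : (0:ℝ) ≤ ((g:ℝ)-1)^((1:ℝ)/2) :=
        Real.rpow_nonneg (by linarith : (0:ℝ) ≤ (g:ℝ)-1) ((1:ℝ)/2)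
      have hfin : ((g:ℝ)-1)^((1:ℝ)/2) * (n:ℝ)^((1:ℝ)/4) ≤ (g:ℝ) * (n:ℝ)^((1:ℝ)/4) :=
        mul_le_mul_of_nonneg_right hgh h14
      calc S ≤ b + t := hS_le
        _ ≤ ((n:ℝ)^((1:ℝ)/4) + 1)
            + (((g:ℝ)-1)^((1:ℝ)/2) * (n:ℝ)^((1:ℝ)/2) + ((g:ℝ)-1)^((1:ℝ)/2) * (n:ℝ)^((1:ℝ)/4)) := by
            rw [mul_add] at ht_le
            linarith
        _ ≤ ((g:ℝ)-1)^((1:ℝ)/2) * (n:ℝ)^((1:ℝ)/2) + ((g:ℝ)+2) * (n:ℝ)^((1:ℝ)/4) := by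
            linarith [h14ge1, hfin]
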